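/- Let G be a locally compact Hausdorff abelian topological group, η : G → ℂ positive definite with η(0) > 0, and assume Δ := {z ∈ G : η(z) ≠ 0} is uniformly discrete in G. Let h : G → ℂ be continuous with compact support, and define g : G → ℂ by g(x) := ∑_{z ∈ Δ} η(z) · h(x − z) (for each x only the finitely many z ∈ Δ ∩ (x − supp h) contribute). Then there exists a constant C > 0 such that for every ε with 0 < ε ≤ 1, every t ∈ P_ε, and every x ∈ G, |g(x) − g(x + t)| ≤ C · ε. -/

import Mathlib

open scoped Pointwise

/-- A function `η : G → ℂ` on an additive abelian group is positive definite if all the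
finite double sums `∑ i, ∑ j, c i * conj (c j) * η (x i - x j)` are nonnegative reals. -/
def IsPositiveDefiniteFn {G : Type*} [AddCommGroup G] (η : G → ℂ) : Prop :=
  ∀ (N : ℕ) (x : Fin N → G) (c : Fin N → ℂ),
    ∃ r : ℝ, 0 ≤ r ∧ ∑ i, ∑ j, c i * (starRingEnd ℂ) (c j) * η (x i - x j) = (r : ℂ)

/-- The autocorrelation pseudometric `ρ(s,t) = |1 − η(s−t)/η(0)|^{1/2}`. -/
noncomputable def acRho {G : Type*} [AddCommGroup G] (η : G → ℂ) (s t : G) : ℝ :=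
  Real.sqrt ‖1 - η (s - t) / η 0‖

/-- The set of `ε`-almost periods `P_ε = {t : ρ(t,0) < ε}`. -/
noncomputable def almostPeriods {G : Type*} [AddCommGroup G] (η : G → ℂ) (ε : ℝ) : Set G :=
  {t : G | acRho η t 0 < ε}

/-- A subset `P` of a topological abelian group is relatively dense if `P + K = G`
for some compact `K`. -/
def RelativelyDense {G : Type*} [AddCommGroup G] [TopologicalSpace G] (P : Set G) : Prop :=
  ∃ K : Set G, IsCompact K ∧ P + K = Set.univ

/-- A subset `P` of a topological abelian group is uniformly discrete if there is an open
neighbourhood `V` of `0` such that `(t + V) ∩ P = {t}` for every `t ∈ P`. -/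
def UniformlyDiscrete {G : Type*} [AddCommGroup G] [TopologicalSpace G] (P : Set G) : Prop :=
  ∃ V : Set G, IsOpen V ∧ (0 : G) ∈ V ∧ ∀ t ∈ P, ({t} + V) ∩ P = {t}

section Aux

variable {G : Type*} [AddCommGroup G] {η : G → ℂ}

lemma pd_eta0 (hpd : IsPositiveDefiniteFn η) : η 0 = ((η 0).re : ℂ) := by
  obtain ⟨r, hr, hsum⟩ := hpd 1 (fun _ => 0) (fun _ => 1)
  simp only [Fin.sum_univ_one, one_mul, map_one, sub_self] at hsum
  rw [hsum]; simp

lemma pd_herm (hpd : IsPositiveDefiniteFn η) (z : G) :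
    η (-z) = (starRingEnd ℂ) (η z) := by
  obtain ⟨r₁, _, h1⟩ := hpd 2 ![0, z] ![1, 1]
  obtain ⟨r₂, _, h2⟩ := hpd 2 ![0, z] ![1, Complex.I]
  simp only [Fin.sum_univ_two, Matrix.cons_val_zero, Matrix.cons_val_one, Matrix.head_cons,
    map_one, one_mul, mul_one, sub_self, zero_sub, sub_zero, Complex.conj_I] at h1 h2
  obtain ⟨e0, he0⟩ : ∃ e0 : ℝ, η 0 = (e0 : ℂ) := ⟨_, pd_eta0 hpd⟩
  rw [he0] at h1 h2
  have i1 := congrArg Complex.im h1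
  have i2 := congrArg Complex.im h2
  simp at i1 i2
  refine Complex.ext ?_ ?_ <;> simp [Complex.conj_re, Complex.conj_im] <;> linarith

lemma pd_key (hpd : IsPositiveDefiniteFn η) (hη0 : 0 < (η 0).re) (s t : G)
    (ha : η s - η (s + t) ≠ 0) :
    ‖η s - η (s + t)‖ ^ 2 ≤ 2 * (η 0).re * ((η 0).re - (η t).re) := by
  set e0 : ℝ := (η 0).re with he0def
  set q : ℝ := Complex.normSq (η s - η (s + t)) with hqdef
  have hq0 : 0 < q := Complex.normSq_pos.mpr ha
  obtain ⟨r, hr, hsum⟩ := hpd 3 ![0, s, s + t]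
    ![(q : ℂ), -(e0 : ℂ) * (starRingEnd ℂ) (η s - η (s + t)),
      (e0 : ℂ) * (starRingEnd ℂ) (η s - η (s + t))]
  simp only [Fin.sum_univ_three, Matrix.cons_val_zero, Matrix.cons_val_one, Matrix.head_cons,
    Matrix.cons_val_two, Matrix.tail_cons, sub_self, zero_sub, sub_zero,
    add_sub_cancel_left, sub_add_cancel_left, map_mul, map_neg, Complex.conj_ofReal,
    Complex.conj_conj] at hsum
  rw [pd_herm hpd s, pd_herm hpd (s + t), pd_herm hpd t, pd_eta0 hpd, ← he0def] at hsum
  have hq : (η s - η (s + t)) * (starRingEnd ℂ) (η s - η (s + t)) = (q : ℂ) :=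
    Complex.mul_conj _
  have hcs : (starRingEnd ℂ) (η s) - (starRingEnd ℂ) (η (s + t))
      = (starRingEnd ℂ) (η s - η (s + t)) := (map_sub _ _ _).symm
  have hT : η t + (starRingEnd ℂ) (η t) = 2 * ((η t).re : ℂ) := by
    rw [Complex.add_conj]; push_cast; ring
  have key : -e0 * q ^ 2 + 2 * e0 ^ 2 * q * (e0 - (η t).re) = r := by
    have h2 : ((-e0 * q ^ 2 + 2 * e0 ^ 2 * q * (e0 - (η t).re) : ℝ) : ℂ) = ((r : ℝ) : ℂ) := by
      rw [← hsum]
      push_cast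
      linear_combination ((e0 : ℂ) * q * (η s - η (s + t))) * hcs +
        (2 * (e0 : ℂ) * q - 2 * (e0 : ℂ) ^ 3 +
          (e0 : ℂ) ^ 2 * (η t + (starRingEnd ℂ) (η t))) * hq +
        ((e0 : ℂ) ^ 2 * q) * hT
    exact_mod_cast h2
  have habs : ‖η s - η (s + t)‖ ^ 2 = q := Complex.sq_norm _
  rw [habs]
  nlinarith [hr, key, hq0, hη0, mul_pos hη0 hq0]

lemma pd_ap (hpd : IsPositiveDefiniteFn η) (hη0 : 0 < (η 0).re) {ε : ℝ} {t : G}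
    (hε : 0 < ε) (ht : acRho η t 0 < ε) (s : G) :
    ‖η s - η (s + t)‖ ≤ Real.sqrt 2 * (η 0).re * ε := by
  have he0 : η 0 = ((η 0).re : ℂ) := pd_eta0 hpd
  set e0 : ℝ := (η 0).re with he0def
  have habs : ‖1 - η t / η 0‖ < ε ^ 2 := by
    have := ht
    rw [acRho, sub_zero, Real.sqrt_lt' hε] at this
    exact this
  have hre : (1 - η t / η 0).re = 1 - (η t).re / e0 := by
    rw [he0]
    simp [Complex.sub_re, Complex.div_ofReal_re]
  have hD : e0 - (η t).re ≤ e0 * ε ^ 2 := by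
    have h1 : (1 - η t / η 0).re ≤ ‖1 - η t / η 0‖ := Complex.re_le_norm _
    have h2 : 1 - (η t).re / e0 < ε ^ 2 := by rw [← hre]; exact lt_of_le_of_lt h1 habs
    have h3 : e0 * (1 - (η t).re / e0) = e0 - (η t).re := by
      field_simp
    nlinarith [hη0]
  by_cases ha : η s - η (s + t) = 0
  · rw [ha]
    simp only [norm_zero]
    positivity
  · have hk := pd_key hpd hη0 s t ha
    have hsq : ‖η s - η (s + t)‖ ^ 2 ≤ 2 * e0 ^ 2 * ε ^ 2 := by nlinarith [hη0]
    nlinarith [Real.sq_sqrt (show (0:ℝ) ≤ 2 by norm_num),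
      Real.sqrt_pos.mpr (show (0:ℝ) < 2 by norm_num),
      norm_nonneg (η s - η (s + t)),
      mul_pos (mul_pos (Real.sqrt_pos.mpr (show (0:ℝ) < 2 by norm_num)) hη0) hε]

lemma ud_card {G : Type*} [AddCommGroup G] [TopologicalSpace G] [IsTopologicalAddGroup G]
    {Δ : Set G} (hud : UniformlyDiscrete Δ) {K : Set G} (hK : IsCompact K) :
    ∃ N : ℕ, ∀ x : G, ∃ F : Finset G, F.card ≤ N ∧ {z : G | z ∈ Δ ∧ x - z ∈ K} ⊆ ↑F := by
  classical
  obtain ⟨V, hVo, hV0, hsep⟩ := hud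
  obtain ⟨U, hU, hUadd⟩ := exists_nhds_zero_half (hVo.mem_nhds hV0)
  set W : Set G := interior U ∩ -interior U with hWdef
  have hWo : IsOpen W := isOpen_interior.inter isOpen_interior.neg
  have hW0 : (0 : G) ∈ W := by
    constructor
    · exact mem_interior_iff_mem_nhds.mpr hU
    · rw [Set.mem_neg, neg_zero]
      exact mem_interior_iff_mem_nhds.mpr hU
  have hWsub : ∀ w1 ∈ W, ∀ w2 ∈ W, w1 - w2 ∈ V := by
    intro w1 h1 w2 h2
    rw [sub_eq_add_neg]
    exact hUadd w1 (interior_subset h1.1) (-w2) (interior_subset h2.2)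
  have hnhds : ∀ k ∈ K, {y : G | y - k ∈ W} ∈ nhds k := by
    intro k _
    exact IsOpen.mem_nhds (hWo.preimage (continuous_sub_right k)) (by simp [hW0])
  obtain ⟨tt, _, hcover⟩ := hK.elim_nhds_subcover (fun k => {y : G | y - k ∈ W}) hnhds
  refine ⟨tt.card, fun x => ?_⟩
  have hsub : ∀ k : G, Set.Subsingleton {z : G | z ∈ Δ ∧ (x - z) - k ∈ W} := by
    intro k z hz z' hz'
    have hv : z - z' ∈ V := by
      have := hWsub (x - z' - k) hz'.2 (x - z - k) hz.2
      have he : (x - z' - k) - (x - z - k) = z - z' := by abel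
      rwa [he] at this
    have : z ∈ ({z'} + V) ∩ Δ := by
      refine ⟨?_, hz.1⟩
      have he2 : z' + (z - z') = z := by abel
      have := Set.add_mem_add (Set.mem_singleton z') hv
      rwa [he2] at this
    rw [hsep z' hz'.1] at this
    exact this
  have hfin : ∀ k : G, Set.Finite {z : G | z ∈ Δ ∧ (x - z) - k ∈ W} :=
    fun k => Set.Subsingleton.finite (hsub k)
  refine ⟨tt.biUnion (fun k => (hfin k).toFinset), ?_, ?_⟩
  · calc (tt.biUnion (fun k => (hfin k).toFinset)).card
        ≤ ∑ k ∈ tt, (hfin k).toFinset.card := Finset.card_biUnion_le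
      _ ≤ ∑ _k ∈ tt, 1 := by
          refine Finset.sum_le_sum (fun k _ => ?_)
          refine Finset.card_le_one.mpr (fun a ha b hb => ?_)
          exact hsub k ((hfin k).mem_toFinset.mp ha) ((hfin k).mem_toFinset.mp hb)
      _ = tt.card := by simp
  · intro z hz
    obtain ⟨hzΔ, hzK⟩ := hz
    have := hcover hzK
    rw [Set.mem_iUnion₂] at this
    obtain ⟨k, hk, hmem⟩ := this
    simp only [Finset.coe_biUnion, Set.mem_iUnion]
    exact ⟨k, hk, by
      rw [Set.Finite.coe_toFinset]
      exact ⟨hzΔ, hmem⟩⟩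

end Aux

/-- Uniform continuity of regularizations in the mixed topology: if the support `Δ` of the
positive definite function `η` (with `η(0) > 0`) is uniformly discrete and
`g(x) = ∑_{z ∈ Δ} η(z) h(x − z)` for a continuous compactly supported `h`, then there is a
constant `C > 0` with `|g(x) − g(x+t)| ≤ C ε` for every `ε ∈ (0,1]`, every `ε`-almost period
`t` and every `x`. -/
theorem regularization_uniformly_continuous_mixed {G : Type*} [AddCommGroup G]
    [TopologicalSpace G] [IsTopologicalAddGroup G] [LocallyCompactSpace G] [T2Space G]
    (η : G → ℂ) (hpd : IsPositiveDefiniteFn η) (hη0 : 0 < (η 0).re)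
    (hud : UniformlyDiscrete {z : G | η z ≠ 0})
    (h : G → ℂ) (hc : Continuous h) (hsupp : HasCompactSupport h) :
    ∃ C : ℝ, 0 < C ∧ ∀ ε : ℝ, 0 < ε → ε ≤ 1 → ∀ t ∈ almostPeriods η ε, ∀ x : G,
      ‖(∑' z : {z : G | η z ≠ 0}, η z * h (x - (z : G))) -
        (∑' z : {z : G | η z ≠ 0}, η z * h (x + t - (z : G)))‖ ≤ C * ε := by
  classical
  set K : Set G := tsupport h with hKdef
  have hKc : IsCompact K := hsupp
  obtain ⟨N, hN⟩ := ud_card hud hKc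
  obtain ⟨M0, hM0⟩ := hc.bounded_above_of_compact_support hsupp
  set M : ℝ := max M0 0 with hMdef
  have hM : ∀ y : G, ‖h y‖ ≤ M := fun y => by
    exact le_trans (hM0 y) (le_max_left _ _)
  have hMnn : 0 ≤ M := le_max_right _ _
  set e0 : ℝ := (η 0).re with he0def
  refine ⟨2 * N * (Real.sqrt 2 * e0 * M) + 1, ?_, ?_⟩
  · have : 0 ≤ 2 * (N : ℝ) * (Real.sqrt 2 * e0 * M) := by
      have := Real.sqrt_nonneg 2
      positivity
    linarith
  intro ε hε hε1 t ht x
  obtain ⟨F1, hF1card, hF1⟩ := hN x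
  obtain ⟨F2, hF2card, hF2⟩ := hN (x + t)
  set S : Finset G := F1 ∪ F2.image (fun z => z - t) with hSdef
  -- rewrite the subtype tsums as tsums over G
  have hs1 : (∑' z : {z : G | η z ≠ 0}, η z * h (x - (z : G)))
      = ∑' z : G, η z * h (x - z) := by
    refine tsum_subtype_eq_of_support_subset
      (f := fun z : G => η z * h (x - z)) (s := {z : G | η z ≠ 0}) ?_
    intro z hz
    have : η z ≠ 0 := by
      intro h0
      exact (Function.mem_support.mp hz) (by rw [h0, zero_mul])
    exact this
  have hs2 : (∑' z : {z : G | η z ≠ 0}, η z * h (x + t - (z : G)))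
      = ∑' z : G, η z * h (x + t - z) := by
    refine tsum_subtype_eq_of_support_subset
      (f := fun z : G => η z * h (x + t - z)) (s := {z : G | η z ≠ 0}) ?_
    intro z hz
    have : η z ≠ 0 := by
      intro h0
      exact (Function.mem_support.mp hz) (by rw [h0, zero_mul])
    exact this
  -- summability
  have hvan1 : ∀ z : G, z ∉ F1 → η z * h (x - z) = 0 := by
    intro z hz
    by_contra hne
    apply hz
    have hη : η z ≠ 0 := fun e => hne (by rw [e, zero_mul])
    have hh : h (x - z) ≠ 0 := fun e => hne (by rw [e, mul_zero])
    have hxz : x - z ∈ K := subset_tsupport h hh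
    exact Finset.mem_coe.mp (hF1 ⟨hη, hxz⟩)
  have hvan2 : ∀ z : G, z ∉ F2.image (fun z => z - t) → η (z + t) * h (x - z) = 0 := by
    intro z hz
    by_contra hne
    apply hz
    have hη : η (z + t) ≠ 0 := fun e => hne (by rw [e, zero_mul])
    have hh : h (x - z) ≠ 0 := fun e => hne (by rw [e, mul_zero])
    have hxz : x + t - (z + t) ∈ K := by
      have he : x + t - (z + t) = x - z := by abel
      rw [he]; exact subset_tsupport h hh
    have : z + t ∈ F2 := Finset.mem_coe.mp (hF2 ⟨hη, hxz⟩)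
    exact Finset.mem_image.mpr ⟨z + t, this, by abel⟩
  have hsum1 : Summable (fun z : G => η z * h (x - z)) :=
    summable_of_ne_finset_zero hvan1
  have hsum2 : Summable (fun z : G => η (z + t) * h (x - z)) :=
    summable_of_ne_finset_zero hvan2
  -- reindex the second tsum
  have hreindex : (∑' z : G, η z * h (x + t - z)) = ∑' w : G, η (w + t) * h (x - w) := by
    have he := (Equiv.addRight t).tsum_eq (fun z : G => η z * h (x + t - z))
    simp only [Equiv.coe_addRight] at he
    rw [← he]
    congr 1
    funext w
    rw [add_sub_add_right_eq_sub]
  -- combine into a single tsum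
  have hdiff : (∑' z : G, η z * h (x - z)) - (∑' w : G, η (w + t) * h (x - w))
      = ∑' w : G, (η w - η (w + t)) * h (x - w) := by
    rw [← Summable.tsum_sub hsum1 hsum2]
    congr 1
    funext w
    ring
  have hvanS : ∀ w : G, w ∉ S → (η w - η (w + t)) * h (x - w) = 0 := by
    intro w hw
    by_contra hne
    apply hw
    have hh : h (x - w) ≠ 0 := fun e => hne (by rw [e, mul_zero])
    have hηd : η w - η (w + t) ≠ 0 := fun e => hne (by rw [e, zero_mul])
    by_cases hη : η w ≠ 0
    · have hxz : x - w ∈ K := subset_tsupport h hh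
      exact Finset.mem_union.mpr (Or.inl (Finset.mem_coe.mp (hF1 ⟨hη, hxz⟩)))
    · push_neg at hη
      have hη2 : η (w + t) ≠ 0 := by
        intro e
        exact hηd (by rw [hη, e, sub_zero])
      have hxz : x + t - (w + t) ∈ K := by
        have he : x + t - (w + t) = x - w := by abel
        rw [he]; exact subset_tsupport h hh
      have : w + t ∈ F2 := Finset.mem_coe.mp (hF2 ⟨hη2, hxz⟩)
      exact Finset.mem_union.mpr (Or.inr (Finset.mem_image.mpr ⟨w + t, this, by abel⟩))
  have htsum : (∑' w : G, (η w - η (w + t)) * h (x - w))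
      = ∑ w ∈ S, (η w - η (w + t)) * h (x - w) := tsum_eq_sum hvanS
  -- per-term bound
  have hterm : ∀ w ∈ S, ‖(η w - η (w + t)) * h (x - w)‖ ≤ Real.sqrt 2 * e0 * ε * M := by
    intro w _
    rw [norm_mul]
    have h1 : ‖η w - η (w + t)‖ ≤ Real.sqrt 2 * e0 * ε := by
      exact pd_ap hpd hη0 hε ht w
    have h2 : ‖h (x - w)‖ ≤ M := by
      exact hM (x - w)
    have hb : 0 ≤ Real.sqrt 2 * e0 * ε :=
      mul_nonneg (mul_nonneg (Real.sqrt_nonneg 2) hη0.le) hε.le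
    exact mul_le_mul h1 h2 (norm_nonneg _) hb
  -- assemble
  rw [hs1, hs2, hreindex, hdiff, htsum]
  have hbound : ‖∑ w ∈ S, (η w - η (w + t)) * h (x - w)‖
      ≤ (S.card : ℝ) * (Real.sqrt 2 * e0 * ε * M) := by
    calc ‖∑ w ∈ S, (η w - η (w + t)) * h (x - w)‖
        ≤ ∑ w ∈ S, ‖(η w - η (w + t)) * h (x - w)‖ := norm_sum_le _ _
      _ ≤ (S.card : ℝ) * (Real.sqrt 2 * e0 * ε * M) := by
          rw [← nsmul_eq_mul]
          exact Finset.sum_le_card_nsmul S _ _ hterm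
  have hcard : (S.card : ℝ) ≤ 2 * N := by
    have h1 : S.card ≤ F1.card + (F2.image (fun z => z - t)).card := Finset.card_union_le _ _
    have h2 : (F2.image (fun z => z - t)).card ≤ F2.card := Finset.card_image_le
    have : S.card ≤ 2 * N := by omega
    exact_mod_cast this
  have hb : 0 ≤ Real.sqrt 2 * e0 * ε * M :=
    mul_nonneg (mul_nonneg (mul_nonneg (Real.sqrt_nonneg 2) hη0.le) hε.le) hMnn
  have hfin : (S.card : ℝ) * (Real.sqrt 2 * e0 * ε * M)
      ≤ (2 * N * (Real.sqrt 2 * e0 * M) + 1) * ε := by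
    have h1 : (S.card : ℝ) * (Real.sqrt 2 * e0 * ε * M)
        ≤ 2 * N * (Real.sqrt 2 * e0 * ε * M) := mul_le_mul_of_nonneg_right hcard hb
    nlinarith [hε]
  linarith [hbound, hfin]
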